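/- There exists a Banach limit on ℓ^∞(ℕ, ℂ): a linear functional μ : ℓ^∞(ℕ, ℂ) → ℂ with ‖μ‖ = 1, μ(constant 1 sequence) = 1, and μ(f(· + 1)) = μ(f) for all bounded f : ℕ → ℂ. Consequently the additive semigroup ℕ is amenable. -/

import Mathlib

open scoped ENNReal
open Filter Topology
set_option maxHeartbeats 1000000
set_option synthInstance.maxHeartbeats 200000

namespace Stmt7Aux

noncomputable def U : Ultrafilter ℕ := Ultrafilter.of Filter.atTop

lemma U_le : (U : Filter ℕ) ≤ Filter.atTop := Ultrafilter.of_le _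

/-- Cesàro averages. -/
noncomputable def S (f : lp (fun _ : ℕ => ℂ) ∞) (N : ℕ) : ℂ :=
  (∑ n ∈ Finset.range (N + 1), f n) / (N + 1)

lemma S_bound (f : lp (fun _ : ℕ => ℂ) ∞) (N : ℕ) : ‖S f N‖ ≤ ‖f‖ := by
  have h1 : ‖∑ n ∈ Finset.range (N + 1), f n‖ ≤ (N + 1) * ‖f‖ := by
    calc ‖∑ n ∈ Finset.range (N + 1), f n‖ ≤ ∑ n ∈ Finset.range (N + 1), ‖f n‖ :=
          norm_sum_le _ _
      _ ≤ ∑ _n ∈ Finset.range (N + 1), ‖f‖ := by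
          refine Finset.sum_le_sum fun i _ => ?_
          exact lp.norm_apply_le_norm ENNReal.top_ne_zero f i
      _ = (N + 1) * ‖f‖ := by simp [Finset.sum_const, mul_comm]
  have hpos : (0 : ℝ) < (N : ℝ) + 1 := by positivity
  have hN : ‖((N : ℂ) + 1)‖ = (N : ℝ) + 1 := by
    rw [show ((N : ℂ) + 1) = ((N + 1 : ℕ) : ℂ) by push_cast; ring, Complex.norm_natCast]
    push_cast; ring
  rw [S, norm_div, hN, div_le_iff₀ hpos]
  exact h1.trans_eq (by ring)

lemma exists_lim (f : lp (fun _ : ℕ => ℂ) ∞) :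
    ∃ a ∈ Metric.closedBall (0 : ℂ) ‖f‖, Filter.Tendsto (S f) (U : Filter ℕ) (𝓝 a) := by
  have hK : IsCompact (Metric.closedBall (0 : ℂ) ‖f‖) := isCompact_closedBall _ _
  have hle : (U.map (S f) : Filter ℂ) ≤ Filter.principal (Metric.closedBall 0 ‖f‖) := by
    rw [Filter.le_principal_iff]
    refine Filter.mem_map.2 ?_
    have : ∀ N, S f N ∈ Metric.closedBall (0 : ℂ) ‖f‖ := fun N => by
      simpa [Metric.mem_closedBall, dist_eq_norm] using S_bound f N
    exact Filter.univ_mem' this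
  obtain ⟨a, ha, hconv⟩ := hK.ultrafilter_le_nhds (U.map (S f)) hle
  exact ⟨a, ha, hconv⟩

noncomputable def mu0 (f : lp (fun _ : ℕ => ℂ) ∞) : ℂ := (exists_lim f).choose

lemma mu0_mem (f : lp (fun _ : ℕ => ℂ) ∞) : mu0 f ∈ Metric.closedBall (0 : ℂ) ‖f‖ :=
  (exists_lim f).choose_spec.1

lemma mu0_tendsto (f : lp (fun _ : ℕ => ℂ) ∞) :
    Filter.Tendsto (S f) (U : Filter ℕ) (𝓝 (mu0 f)) :=
  (exists_lim f).choose_spec.2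

lemma mu0_eq_of_tendsto {f : lp (fun _ : ℕ => ℂ) ∞} {a : ℂ}
    (h : Filter.Tendsto (S f) (U : Filter ℕ) (𝓝 a)) : mu0 f = a :=
  tendsto_nhds_unique (mu0_tendsto f) h

lemma S_add (f g : lp (fun _ : ℕ => ℂ) ∞) (N : ℕ) : S (f + g) N = S f N + S g N := by
  simp only [S, lp.coeFn_add, Pi.add_apply, Finset.sum_add_distrib]
  ring

lemma S_smul (c : ℂ) (f : lp (fun _ : ℕ => ℂ) ∞) (N : ℕ) : S (c • f) N = c * S f N := by
  simp only [S, lp.coeFn_smul, Pi.smul_apply, smul_eq_mul, ← Finset.mul_sum]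
  ring

lemma mu0_add (f g : lp (fun _ : ℕ => ℂ) ∞) : mu0 (f + g) = mu0 f + mu0 g := by
  refine mu0_eq_of_tendsto ?_
  exact ((mu0_tendsto f).add (mu0_tendsto g)).congr fun N => (S_add f g N).symm

lemma mu0_smul (c : ℂ) (f : lp (fun _ : ℕ => ℂ) ∞) : mu0 (c • f) = c * mu0 f := by
  refine mu0_eq_of_tendsto ?_
  exact ((mu0_tendsto f).const_mul c).congr fun N => (S_smul c f N).symm

lemma mu0_norm_le (f : lp (fun _ : ℕ => ℂ) ∞) : ‖mu0 f‖ ≤ ‖f‖ := by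
  simpa [Metric.mem_closedBall, dist_eq_norm] using mu0_mem f

lemma mu0_const_one (c : lp (fun _ : ℕ => ℂ) ∞) (hc : ∀ n, c n = 1) : mu0 c = 1 := by
  refine mu0_eq_of_tendsto ?_
  have hS : ∀ N, S c N = 1 := by
    intro N
    have : (∑ n ∈ Finset.range (N + 1), c n) = (N + 1 : ℂ) := by
      simp [hc, Finset.sum_const]
    rw [S, this, div_self (Nat.cast_add_one_ne_zero N)]
  have : S c = fun _ => 1 := funext hS
  rw [this]
  exact tendsto_const_nhds

lemma mu0_shift (f g : lp (fun _ : ℕ => ℂ) ∞) (hg : ∀ n, g n = f (n + 1)) :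
    mu0 g = mu0 f := by
  refine mu0_eq_of_tendsto ?_
  have hdiff : Filter.Tendsto (fun N => S g N - S f N) Filter.atTop (𝓝 0) := by
    have heq : ∀ N, S g N - S f N = (f (N + 1) - f 0) / (N + 1) := by
      intro N
      have hsum : (∑ n ∈ Finset.range (N + 1), g n)
          = (∑ n ∈ Finset.range (N + 1), f n) + f (N + 1) - f 0 := by
        have h1 : (∑ n ∈ Finset.range (N + 1), g n)
            = ∑ n ∈ Finset.range (N + 1), f (n + 1) := by
          exact Finset.sum_congr rfl fun n _ => hg n
        have h2 : (∑ n ∈ Finset.range (N + 2), f n)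
            = (∑ n ∈ Finset.range (N + 1), f (n + 1)) + f 0 := Finset.sum_range_succ' _ _
        have h3 : (∑ n ∈ Finset.range (N + 2), f n)
            = (∑ n ∈ Finset.range (N + 1), f n) + f (N + 1) := Finset.sum_range_succ _ _
        rw [h1]
        have := h2.symm.trans h3
        linear_combination this
      rw [S, S, hsum]
      ring
    have hbd : ∀ N : ℕ, ‖S g N - S f N‖ ≤ 2 * ‖f‖ / (N + 1) := by
      intro N
      rw [heq, norm_div]
      have hN : ‖((N : ℂ) + 1)‖ = (N : ℝ) + 1 := by
        rw [show ((N : ℂ) + 1) = ((N + 1 : ℕ) : ℂ) by push_cast; ring, Complex.norm_natCast]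
        push_cast; ring
      rw [hN]
      gcongr
      calc ‖f (N + 1) - f 0‖ ≤ ‖f (N + 1)‖ + ‖f 0‖ := norm_sub_le _ _
        _ ≤ ‖f‖ + ‖f‖ := add_le_add (lp.norm_apply_le_norm ENNReal.top_ne_zero f _)
            (lp.norm_apply_le_norm ENNReal.top_ne_zero f _)
        _ = 2 * ‖f‖ := by ring
    refine squeeze_zero_norm hbd ?_
    have h0 : Filter.Tendsto (fun N : ℕ => 2 * ‖f‖ / (N : ℝ)) Filter.atTop (𝓝 0) :=
      tendsto_const_div_atTop_nhds_zero_nat _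
    refine (h0.comp (Filter.tendsto_add_atTop_nat 1)).congr fun n => ?_
    simp [Function.comp]
  have hdiffU : Filter.Tendsto (fun N => S g N - S f N) (U : Filter ℕ) (𝓝 0) :=
    hdiff.mono_left U_le
  have := (mu0_tendsto f).add hdiffU
  simp only [add_zero] at this
  refine this.congr fun N => by ring

noncomputable def muL : lp (fun _ : ℕ => ℂ) ∞ →ₗ[ℂ] ℂ where
  toFun := mu0
  map_add' := mu0_add
  map_smul' := mu0_smul

noncomputable def mu : lp (fun _ : ℕ => ℂ) ∞ →L[ℂ] ℂ :=
  muL.mkContinuous 1 (fun f => by have h : ‖muL f‖ ≤ ‖f‖ := mu0_norm_le f; simpa using h)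

/-- The constant one sequence. -/
noncomputable def cOne : lp (fun _ : ℕ => ℂ) ∞ :=
  ⟨(fun _ => 1 : ∀ _ : ℕ, ℂ), memℓp_infty ⟨1, by rintro x ⟨i, rfl⟩; simp⟩⟩

lemma cOne_apply (n : ℕ) : (cOne : ∀ _ : ℕ, ℂ) n = 1 := rfl

lemma cOne_norm : ‖cOne‖ = 1 := by
  refine le_antisymm (lp.norm_le_of_forall_le (by norm_num) fun i => by simp [cOne_apply]) ?_
  have := lp.norm_apply_le_norm (E := fun _ : ℕ => ℂ) ENNReal.top_ne_zero cOne 0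
  simpa [cOne_apply] using this

end Stmt7Aux

/-- Existence of a Banach limit on `ℓ^∞(ℕ, ℂ)`: a norm-one, unital,
shift-invariant linear functional.  In particular `(ℕ, +)` is amenable. -/
theorem stmt_7 :
    ∃ μ : lp (fun _ : ℕ => ℂ) ∞ →L[ℂ] ℂ,
      ‖μ‖ = 1 ∧
      (∀ c : lp (fun _ : ℕ => ℂ) ∞, (∀ n : ℕ, c n = 1) → μ c = 1) ∧
      (∀ f g : lp (fun _ : ℕ => ℂ) ∞, (∀ n : ℕ, g n = f (n + 1)) → μ g = μ f) := by
  classical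
  refine ⟨Stmt7Aux.mu, ?_, ?_, ?_⟩
  · refine le_antisymm ?_ ?_
    · exact Stmt7Aux.muL.mkContinuous_norm_le (by norm_num)
        (fun f => by have h : ‖Stmt7Aux.muL f‖ ≤ ‖f‖ := Stmt7Aux.mu0_norm_le f; simpa using h)
    · have h1 : Stmt7Aux.mu Stmt7Aux.cOne = 1 :=
        Stmt7Aux.mu0_const_one _ Stmt7Aux.cOne_apply
      have := Stmt7Aux.mu.le_opNorm Stmt7Aux.cOne
      rw [h1, Stmt7Aux.cOne_norm, mul_one] at this
      simpa using this
  · intro c hc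
    exact Stmt7Aux.mu0_const_one c hc
  · intro f g hg
    exact Stmt7Aux.mu0_shift f g hg
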